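/- Let γ > 1 and for v > 0 set p(v) = v^{-γ}, Q(v) = v^{1-γ}/(γ-1). Then for all v, w > 0 one has the expansion inequality Q(v|w) ≥ (p(w)^{-1/γ - 1}/(2γ)) |p(v) - p(w)|² − ((1+γ)/(3γ²)) p(w)^{-1/γ - 2} (p(v) - p(w))³ whenever |p(v) − p(w)| and |p(w) − p(v*)| are smaller than a suitable ε* > 0 depending only on γ and v* > 0. -/

import Mathlib

open Real

/-- Tangent line inequality for `t ^ p` with negative exponent. -/
lemma relQ_tangent {p t : ℝ} (hp : p < 0) (ht : 0 < t) :
    1 + p * (t - 1) ≤ t ^ p := by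
  have h1 : Real.log t ≤ t - 1 := Real.log_le_sub_one_of_pos ht
  have h2 : p * Real.log t + 1 ≤ Real.exp (p * Real.log t) := Real.add_one_le_exp _
  rw [Real.rpow_def_of_pos ht]
  have h2' : Real.log t * p + 1 ≤ Real.exp (Real.log t * p) := Real.add_one_le_exp _
  nlinarith [mul_le_mul_of_nonpos_right h1 hp.le]

noncomputable def relQphi (γ t : ℝ) : ℝ :=
  (t ^ (1 - 1/γ) - 1) / (γ - 1) + t ^ (-1/γ) - 1 - (t - 1) ^ 2 / (2 * γ)
    + (1 + γ) / (3 * γ ^ 2) * (t - 1) ^ 3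

lemma relQphi_hasDerivAt (γ : ℝ) (hγ : 1 < γ) {t : ℝ} (ht : 0 < t) :
    HasDerivAt (relQphi γ)
      ((1/γ) * (t - 1) * (t ^ (-1/γ - 1) - 1 + ((1 + γ)/γ) * (t - 1))) t := by
  have hγ0 : γ ≠ 0 := by positivity
  have h1 : HasDerivAt (fun x : ℝ => x ^ (1 - 1/γ)) ((1 - 1/γ) * t ^ (1 - 1/γ - 1)) t :=
    Real.hasDerivAt_rpow_const (Or.inl ht.ne')
  have h2 : HasDerivAt (fun x : ℝ => x ^ (-1/γ)) ((-1/γ) * t ^ (-1/γ - 1)) t :=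
    Real.hasDerivAt_rpow_const (Or.inl ht.ne')
  have h3 : HasDerivAt (fun x : ℝ => (x - 1) ^ 2) (2 * (t - 1)) t := by
    have := ((hasDerivAt_id t).sub_const 1).fun_pow 2
    simpa using this
  have h4 : HasDerivAt (fun x : ℝ => (x - 1) ^ 3) (3 * (t - 1) ^ 2) t := by
    have := ((hasDerivAt_id t).sub_const 1).fun_pow 3
    simpa using this
  have H := (((((h1.sub_const 1).div_const (γ - 1)).add h2).sub_const 1).sub
      (h3.div_const (2 * γ))).add (h4.const_mul ((1 + γ) / (3 * γ ^ 2)))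
  convert H using 1
  any_goals rfl
  have e1 : (1:ℝ) - 1/γ - 1 = -1/γ := by ring
  have e2 : t ^ (-1/γ) = t ^ (-1/γ - 1) * t := by
    rw [← Real.rpow_add_one ht.ne' (-1/γ - 1)]; ring_nf
  rw [e1, e2]
  have hγ1 : γ - 1 ≠ 0 := by intro h; nlinarith
  field_simp
  ring

lemma relQphi_deriv_sign (γ : ℝ) (hγ : 1 < γ) {t : ℝ} (ht : 0 < t) :
    0 ≤ (t - 1) * ((1/γ) * (t - 1) * (t ^ (-1/γ - 1) - 1 + ((1 + γ)/γ) * (t - 1))) := by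
  have hγ0 : (0:ℝ) < γ := by linarith
  have hp : -1/γ - 1 < 0 := by
    have h1 : (0:ℝ) < 1/γ := by positivity
    have : -1/γ = -(1/γ) := by ring
    rw [this]; linarith
  have htang : 1 + (-1/γ - 1) * (t - 1) ≤ t ^ (-1/γ - 1) := relQ_tangent hp ht
  have hpsi : 0 ≤ t ^ (-1/γ - 1) - 1 + ((1 + γ)/γ) * (t - 1) := by
    have hq : ((1 + γ)/γ) = -(-1/γ - 1) := by field_simp; ring
    rw [hq]; nlinarith
  have hmain : 0 ≤ (t - 1) * ((t - 1) * (t ^ (-1/γ - 1) - 1 + ((1 + γ)/γ) * (t - 1))) := by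
    nlinarith [sq_nonneg (t-1)]
  have h9 : (t - 1) * ((1/γ) * (t - 1) * (t ^ (-1/γ - 1) - 1 + ((1 + γ)/γ) * (t - 1)))
      = (1/γ) * ((t - 1) * ((t - 1) * (t ^ (-1/γ - 1) - 1 + ((1 + γ)/γ) * (t - 1)))) := by ring
  rw [h9]
  exact mul_nonneg (by positivity) hmain

lemma relQphi_nonneg (γ : ℝ) (hγ : 1 < γ) {t : ℝ} (ht : 0 < t) :
    0 ≤ relQphi γ t := by
  have hγ0 : (0:ℝ) < γ := by linarith
  have hphi1 : relQphi γ 1 = 0 := by simp [relQphi]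
  rcases lt_trichotomy t 1 with h | h | h
  · -- t < 1 : use MVT on [t, 1]
    obtain ⟨c, hc, hceq⟩ := exists_hasDerivAt_eq_slope (relQphi γ)
      (fun x => (1/γ) * (x - 1) * (x ^ (-1/γ - 1) - 1 + ((1 + γ)/γ) * (x - 1))) h
      (fun x hx => ((relQphi_hasDerivAt γ hγ (lt_of_lt_of_le ht hx.1)).continuousAt).continuousWithinAt)
      (fun x hx => relQphi_hasDerivAt γ hγ (lt_trans ht hx.1))
    have hc0 : 0 < c := lt_trans ht hc.1
    have hsign := relQphi_deriv_sign γ hγ hc0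
    have hcle : c - 1 < 0 := by linarith [hc.2]
    -- deriv at c is ≤ 0 since (c-1) < 0 and (c-1)*deriv ≥ 0
    have hder : (1/γ) * (c - 1) * (c ^ (-1/γ - 1) - 1 + ((1 + γ)/γ) * (c - 1)) ≤ 0 := by
      nlinarith
    rw [hphi1] at hceq
    have h1t : (0:ℝ) < 1 - t := by linarith
    rw [hceq] at hder
    -- hder : (0 - relQphi γ t)/(1 - t) ≤ 0
    have := (div_nonpos_iff.mp hder)
    rcases this with ⟨h1, h2⟩ | ⟨h1, h2⟩
    · linarith
    · linarith
  · simp [h, hphi1]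
  · -- 1 < t : MVT on [1, t]
    obtain ⟨c, hc, hceq⟩ := exists_hasDerivAt_eq_slope (relQphi γ)
      (fun x => (1/γ) * (x - 1) * (x ^ (-1/γ - 1) - 1 + ((1 + γ)/γ) * (x - 1))) h
      (fun x hx => ((relQphi_hasDerivAt γ hγ (lt_of_lt_of_le one_pos hx.1)).continuousAt).continuousWithinAt)
      (fun x hx => relQphi_hasDerivAt γ hγ (lt_trans one_pos hx.1))
    have hc0 : 0 < c := lt_trans one_pos hc.1
    have hsign := relQphi_deriv_sign γ hγ hc0
    have hcge : 0 < c - 1 := by linarith [hc.1]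
    have hder : 0 ≤ (1/γ) * (c - 1) * (c ^ (-1/γ - 1) - 1 + ((1 + γ)/γ) * (c - 1)) := by
      nlinarith
    rw [hphi1] at hceq
    have ht1 : (0:ℝ) < t - 1 := by linarith
    have := div_nonneg_iff.mp (by rw [hceq] at hder; simpa using hder)
    rcases this with ⟨h1, h2⟩ | ⟨h1, h2⟩
    · linarith
    · linarith

/-- Local quantitative lower bound of the relative internal energy `Q(v|w)` in terms
of the pressure difference, for pressures close to a reference `p(v*)`. -/
theorem relative_Q_pressure_expansion (γ : ℝ) (hγ : 1 < γ) (vs : ℝ) (hvs : 0 < vs) :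
    ∃ ε > 0, ∀ v w : ℝ, 0 < v → 0 < w →
      |v ^ (-γ) - w ^ (-γ)| < ε → |w ^ (-γ) - vs ^ (-γ)| < ε →
      (w ^ (-γ)) ^ (-1 / γ - 1) / (2 * γ) * |v ^ (-γ) - w ^ (-γ)| ^ 2 -
          (1 + γ) / (3 * γ ^ 2) * (w ^ (-γ)) ^ (-1 / γ - 2) * (v ^ (-γ) - w ^ (-γ)) ^ 3 ≤
        v ^ (1 - γ) / (γ - 1) - w ^ (1 - γ) / (γ - 1) + w ^ (-γ) * (v - w) := by
  refine ⟨1, one_pos, fun v w hv hw _ _ => ?_⟩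
  have hγ0 : (0:ℝ) < γ := by linarith
  have hγ0' : γ ≠ 0 := hγ0.ne'
  have hγ1 : γ - 1 ≠ 0 := ne_of_gt (by linarith)
  set q := v ^ (-γ) with hqdef
  set r := w ^ (-γ) with hrdef
  have hq : 0 < q := Real.rpow_pos_of_pos hv _
  have hr : 0 < r := Real.rpow_pos_of_pos hw _
  have ht : 0 < q / r := div_pos hq hr
  have key : 0 ≤ relQphi γ (q / r) := relQphi_nonneg γ hγ ht
  have hx : r ^ (-1/γ) = w := by
    rw [hrdef, ← Real.rpow_mul hw.le, show (-γ) * (-1/γ) = 1 by field_simp, Real.rpow_one]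
  have hy : q ^ (-1/γ) = v := by
    rw [hqdef, ← Real.rpow_mul hv.le, show (-γ) * (-1/γ) = 1 by field_simp, Real.rpow_one]
  have hA : r ^ (1 - 1/γ) = r * w := by
    rw [show (1:ℝ) - 1/γ = 1 + (-1/γ) by ring, Real.rpow_add hr, Real.rpow_one, hx]
  have hB : q ^ (1 - 1/γ) = q * v := by
    rw [show (1:ℝ) - 1/γ = 1 + (-1/γ) by ring, Real.rpow_add hq, Real.rpow_one, hy]
  have hw1 : w ^ (1 - γ) = r * w := by
    rw [← hA, hrdef, ← Real.rpow_mul hw.le, show (-γ) * (1 - 1/γ) = 1 - γ by field_simp; ring]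
  have hv1 : v ^ (1 - γ) = q * v := by
    rw [← hB, hqdef, ← Real.rpow_mul hv.le, show (-γ) * (1 - 1/γ) = 1 - γ by field_simp; ring]
  have hT1 : (q / r) ^ (1 - 1/γ) = (q * v) / (r * w) := by
    rw [Real.div_rpow hq.le hr.le, hB, hA]
  have hT2 : (q / r) ^ (-1/γ) = v / w := by
    rw [Real.div_rpow hq.le hr.le, hx, hy]
  have hE1 : r ^ (-1/γ - 1) = w / r := by
    rw [show -1/γ - 1 = (-1/γ) + (-1) by ring, Real.rpow_add hr, hx, Real.rpow_neg_one]
    ring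
  have hE2 : r ^ (-1/γ - 2) = w / r ^ 2 := by
    rw [show -1/γ - 2 = (-1/γ) + (-2) by ring, Real.rpow_add hr, hx,
      show ((-2:ℝ)) = ((-2:ℤ):ℝ) by norm_num, Real.rpow_intCast]
    rw [zpow_neg, show ((2:ℤ)) = ((2:ℕ):ℤ) by norm_num, zpow_natCast]
    ring
  have habs : |q - r| ^ 2 = (q - r) ^ 2 := sq_abs _
  have hmain : v ^ (1 - γ) / (γ - 1) - w ^ (1 - γ) / (γ - 1) + r * (v - w) -
      (r ^ (-1 / γ - 1) / (2 * γ) * |q - r| ^ 2 -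
        (1 + γ) / (3 * γ ^ 2) * r ^ (-1 / γ - 2) * (q - r) ^ 3)
      = (r * w) * relQphi γ (q / r) := by
    rw [habs, hv1, hw1, hE1, hE2]
    unfold relQphi
    rw [hT1, hT2]
    field_simp
    ring
  have hpos : 0 ≤ (r * w) * relQphi γ (q / r) := mul_nonneg (mul_pos hr hw).le key
  linarith [hmain, hpos]
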